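/- Let L be a finite lattice and K a field such that the join-meet ideal I_L ⊆ K[L] is a radical ideal, and let A, B ⊆ L be admissible subsets. Then P_A(L) ⊊ P_B(L) if and only if A ⊊ B and I_{L_A} : ∏_{a∉A} X_a ⊆ (I_{L_B} : ∏_{b∉B} X_b) + (X_b : b ∈ B∖A). -/

import Mathlib

open MvPolynomial

/-- The join-meet ideal of a finite lattice `L`: the ideal of `K[L]` generated by the
basic binomials `X a * X b - X (a ⊓ b) * X (a ⊔ b)` for incomparable `a, b ∈ L`. -/
noncomputable def joinMeetIdeal (K : Type*) [Field K] (L : Type*) [Lattice L] :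
    Ideal (MvPolynomial L K) :=
  Ideal.span {f | ∃ a b : L, ¬ a ≤ b ∧ ¬ b ≤ a ∧
    f = X a * X b - X (a ⊓ b) * X (a ⊔ b)}

/-- A subset `A` of a lattice is admissible if for every incomparable pair `a, b`,
`A` contains `a` or `b` iff `A` contains `a ⊓ b` or `a ⊔ b`. -/
def Admissible {L : Type*} [Lattice L] (A : Set L) : Prop :=
  ∀ a b : L, ¬ a ≤ b → ¬ b ≤ a → ((a ∈ A ∨ b ∈ A) ↔ (a ⊓ b ∈ A ∨ a ⊔ b ∈ A))

/-- The ideal `I_{L_A}` of `K[L]` generated by the basic binomials of the incomparable pairs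
of elements of `L ∖ A`. -/
noncomputable def sublatticeJoinMeetIdeal (K : Type*) [Field K] (L : Type*) [Lattice L]
    (A : Set L) : Ideal (MvPolynomial L K) :=
  Ideal.span {f | ∃ a b : L, a ∉ A ∧ b ∉ A ∧ ¬ a ≤ b ∧ ¬ b ≤ a ∧
    f = X a * X b - X (a ⊓ b) * X (a ⊔ b)}

open scoped Classical in
/-- The prime ideal `P_A(L) = (I_{L_A} : ∏_{a ∉ A} X a) + (X a : a ∈ A)`. -/
noncomputable def PA (K : Type*) [Field K] (L : Type*) [Lattice L] [Fintype L]
    (A : Set L) : Ideal (MvPolynomial L K) :=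
  Submodule.colon (sublatticeJoinMeetIdeal K L A)
      ((Ideal.span {∏ a ∈ Finset.univ.filter (fun a : L => a ∉ A), X a} : Ideal (MvPolynomial L K)) : Set (MvPolynomial L K)) ⊔
    Ideal.span {f | ∃ a ∈ A, f = (X a : MvPolynomial L K)}

namespace PAHelper

open scoped Classical

variable {L : Type*} [Lattice L] [Fintype L] (K : Type*) [Field K]

/-- The ideal generated by the variables indexed by `S`. -/
noncomputable def Jd (S : Set L) : Ideal (MvPolynomial L K) :=
  Ideal.span {f | ∃ a ∈ S, f = (X a : MvPolynomial L K)}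

/-- The product of the variables indexed by the complement of `S`. -/
noncomputable def fP (S : Set L) : MvPolynomial L K :=
  ∏ a ∈ Finset.univ.filter (fun a : L => a ∉ S), X a

/-- The colon ideal `I_{L_S} : fP S`. -/
noncomputable def QQ (S : Set L) : Ideal (MvPolynomial L K) :=
  Submodule.colon (sublatticeJoinMeetIdeal K L S) ((Ideal.span {fP K S} : Ideal (MvPolynomial L K)) : Set (MvPolynomial L K))

lemma PA_eq (S : Set L) : PA K L S = QQ K S ⊔ Jd K S := rfl

lemma mem_QQ {S : Set L} {g : MvPolynomial L K} :
    g ∈ QQ K S ↔ g * fP K S ∈ sublatticeJoinMeetIdeal K L S :=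
  Ideal.mem_colon_span_singleton

/-- Helper: a ring hom kills an ideal span if it kills all generators. -/
lemma ringHom_eq_zero_of_mem_span {R S : Type*} [CommRing R] [CommRing S] (φ : R →+* S)
    {s : Set R} (h : ∀ x ∈ s, φ x = 0) {p : R} (hp : p ∈ Ideal.span s) : φ p = 0 := by
  have h2 : Ideal.map φ (Ideal.span s) ≤ ⊥ := by
    rw [Ideal.map_span]
    refine Ideal.span_le.2 ?_
    rintro _ ⟨x, hx, rfl⟩
    simp [h x hx]
  simpa using h2 (Ideal.mem_map_of_mem φ hp)

/-- Helper: an algebra endomorphism preserves an ideal span if it preserves generators. -/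
lemma algHom_apply_mem_span (φ : MvPolynomial L K →ₐ[K] MvPolynomial L K)
    {s : Set (MvPolynomial L K)}
    (h : ∀ x ∈ s, φ x ∈ Ideal.span s) {p : MvPolynomial L K} (hp : p ∈ Ideal.span s) :
    φ p ∈ Ideal.span s := by
  have h2 : Ideal.map φ (Ideal.span s) ≤ Ideal.span s := by
    rw [Ideal.map_span]
    exact Ideal.span_le.2 (by rintro _ ⟨x, hx, rfl⟩; exact h x hx)
  exact h2 (Ideal.mem_map_of_mem φ hp)

section Eval

/-- Evaluation at the point which is `0` on `S` and `1` off `S`. -/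
noncomputable def ev (S : Set L) : MvPolynomial L K →+* K :=
  (eval (fun a : L => if a ∈ S then (0 : K) else 1) : MvPolynomial L K →+* K)

lemma incomp_not_mem {S : Set L} (hS : Admissible S) {a b : L}
    (h1 : ¬ a ≤ b) (h2 : ¬ b ≤ a) (ha : a ∉ S) (hb : b ∉ S) :
    a ⊓ b ∉ S ∧ a ⊔ b ∉ S := by
  have hni : ¬ (a ⊓ b ∈ S ∨ a ⊔ b ∈ S) := by
    intro h
    rcases (hS a b h1 h2).2 h with h' | h'
    exacts [ha h', hb h']
  exact ⟨fun h => hni (Or.inl h), fun h => hni (Or.inr h)⟩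

lemma ev_ILS {S : Set L} (hS : Admissible S) {p : MvPolynomial L K}
    (hp : p ∈ sublatticeJoinMeetIdeal K L S) : ev K S p = 0 := by
  refine ringHom_eq_zero_of_mem_span (ev K S) ?_ hp
  rintro _ ⟨a, b, ha, hb, h1, h2, rfl⟩
  obtain ⟨hm, hj⟩ := incomp_not_mem hS h1 h2 ha hb
  simp [ev, if_neg ha, if_neg hb, if_neg hm, if_neg hj]

lemma ev_fP (S : Set L) : ev K S (fP K S) = 1 := by
  rw [fP, map_prod]
  refine Finset.prod_eq_one fun a haf => ?_
  have : a ∉ S := (Finset.mem_filter.1 haf).2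
  simp [ev, if_neg this]

lemma ev_PA {S : Set L} (hS : Admissible S) {g : MvPolynomial L K}
    (hg : g ∈ PA K L S) : ev K S g = 0 := by
  rw [PA_eq] at hg
  obtain ⟨u, hu, v, hv, rfl⟩ := Submodule.mem_sup.1 hg
  have hu0 : ev K S u = 0 := by
    have h1 : ev K S (u * fP K S) = 0 := ev_ILS K hS ((mem_QQ K).1 hu)
    rw [map_mul, ev_fP, mul_one] at h1
    exact h1
  have hv0 : ev K S v = 0 := by
    refine ringHom_eq_zero_of_mem_span (ev K S) ?_ hv
    rintro _ ⟨a, ha, rfl⟩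
    simp [ev, if_pos ha]
  rw [map_add, hu0, hv0, add_zero]

lemma X_mem_PA {S : Set L} {a : L} (ha : a ∈ S) : (X a : MvPolynomial L K) ∈ PA K L S :=
  Submodule.mem_sup_right (Ideal.subset_span ⟨a, ha, rfl⟩)

lemma X_not_mem_PA {S : Set L} (hS : Admissible S) {a : L} (ha : a ∉ S) :
    (X a : MvPolynomial L K) ∉ PA K L S := by
  intro h
  have h0 := ev_PA K hS h
  rw [ev] at h0
  simp [if_neg ha] at h0

end Eval

section Sigma

/-- The algebra endomorphism of `K[L]` killing the variables indexed by `A`. -/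
noncomputable def σh (A : Set L) : MvPolynomial L K →ₐ[K] MvPolynomial L K :=
  aeval (fun a : L => if a ∈ A then 0 else X a)

lemma σh_X_of_mem {A : Set L} {a : L} (ha : a ∈ A) : σh K A (X a) = 0 := by
  simp [σh, if_pos ha]

lemma σh_X_of_not_mem {A : Set L} {a : L} (ha : a ∉ A) : σh K A (X a) = X a := by
  simp [σh, if_neg ha]

lemma σh_fixes_ILS {A S : Set L} (hS : Admissible S) (hAS : A ⊆ S) {p : MvPolynomial L K}
    (hp : p ∈ sublatticeJoinMeetIdeal K L S) : σh K A p ∈ sublatticeJoinMeetIdeal K L S := by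
  refine algHom_apply_mem_span K (σh K A) ?_ hp
  rintro _ ⟨a, b, ha, hb, h1, h2, rfl⟩
  obtain ⟨hm, hj⟩ := incomp_not_mem hS h1 h2 ha hb
  have e : σh K A (X a * X b - X (a ⊓ b) * X (a ⊔ b))
      = X a * X b - X (a ⊓ b) * X (a ⊔ b) := by
    rw [map_sub, map_mul, map_mul, σh_X_of_not_mem K (fun h => ha (hAS h)),
      σh_X_of_not_mem K (fun h => hb (hAS h)), σh_X_of_not_mem K (fun h => hm (hAS h)),
      σh_X_of_not_mem K (fun h => hj (hAS h))]
  rw [e]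
  exact Ideal.subset_span ⟨a, b, ha, hb, h1, h2, rfl⟩

lemma σh_fixes_fP {A S : Set L} (hAS : A ⊆ S) : σh K A (fP K S) = fP K S := by
  rw [fP, map_prod]
  refine Finset.prod_congr rfl fun a haf => ?_
  have : a ∉ S := (Finset.mem_filter.1 haf).2
  exact σh_X_of_not_mem K (fun h => this (hAS h))

lemma σh_mem_QQ {A S : Set L} (hS : Admissible S) (hAS : A ⊆ S) {u : MvPolynomial L K}
    (hu : u ∈ QQ K S) : σh K A u ∈ QQ K S := by
  rw [mem_QQ] at hu ⊢
  have : σh K A u * fP K S = σh K A (u * fP K S) := by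
    rw [map_mul, σh_fixes_fP K hAS]
  rw [this]
  exact σh_fixes_ILS K hS hAS hu

lemma σh_mem_Jd {A S : Set L} (hSA : ∀ a ∈ S, a ∉ A) {v : MvPolynomial L K}
    (hv : v ∈ Jd K S) : σh K A v ∈ Jd K S := by
  refine algHom_apply_mem_span K (σh K A) ?_ hv
  rintro _ ⟨a, ha, rfl⟩
  rw [σh_X_of_not_mem K (hSA a ha)]
  exact Ideal.subset_span ⟨a, ha, rfl⟩

lemma σh_Jd_eq_zero {A : Set L} {w : MvPolynomial L K} (hw : w ∈ Jd K A) :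
    σh K A w = 0 := by
  have := ringHom_eq_zero_of_mem_span ((σh K A) : MvPolynomial L K →+* MvPolynomial L K)
    (s := {f | ∃ a ∈ A, f = (X a : MvPolynomial L K)}) ?_ hw
  · simpa using this
  · rintro _ ⟨a, ha, rfl⟩
    simpa using σh_X_of_mem K ha

end Sigma

section Split

/-- Splitting `K[L]` as polynomials in the `A`-variables over polynomials
in the other variables. -/
noncomputable def ee (A : Set L) :
    MvPolynomial L K ≃ₐ[K]
      MvPolynomial {a : L // a ∈ A} (MvPolynomial {a : L // a ∉ A} K) :=
  (renameEquiv K (Equiv.sumCompl (· ∈ A)).symm).trans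
    (sumAlgEquiv K {a : L // a ∈ A} {a : L // a ∉ A})

lemma ee_X_of_mem {A : Set L} {a : L} (ha : a ∈ A) :
    ee K A (X a) = X (⟨a, ha⟩ : {a : L // a ∈ A}) := by
  simp [ee, Equiv.sumCompl_symm_apply_of_pos ha, sumToIter_Xl]

lemma ee_X_of_not_mem {A : Set L} {a : L} (ha : a ∉ A) :
    ee K A (X a) = C (X (⟨a, ha⟩ : {a : L // a ∉ A})) := by
  simp [ee, Equiv.sumCompl_symm_apply_of_neg ha, sumToIter_Xr]

/-- The inclusion of the subring of polynomials in the non-`A`-variables. -/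
noncomputable def cmap (A : Set L) :
    MvPolynomial {a : L // a ∉ A} K →ₐ[K] MvPolynomial L K :=
  ((ee K A).symm.toAlgHom).comp
    (IsScalarTower.toAlgHom K (MvPolynomial {a : L // a ∉ A} K)
      (MvPolynomial {a : L // a ∈ A} (MvPolynomial {a : L // a ∉ A} K)))

lemma cmap_apply {A : Set L} (q : MvPolynomial {a : L // a ∉ A} K) :
    cmap K A q = (ee K A).symm (C q) := by
  simp [cmap, MvPolynomial.algebraMap_eq]

lemma cmap_X {A : Set L} (j : {a : L // a ∉ A}) : cmap K A (X j) = X (j : L) := by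
  apply (ee K A).injective
  rw [cmap_apply, AlgEquiv.apply_symm_apply, ee_X_of_not_mem K j.prop]

lemma σh_cmap {A : Set L} (q : MvPolynomial {a : L // a ∉ A} K) :
    σh K A (cmap K A q) = cmap K A q := by
  have h : (σh K A).comp (cmap K A) = cmap K A := by
    apply MvPolynomial.algHom_ext
    intro j
    rw [AlgHom.comp_apply, cmap_X, σh_X_of_not_mem K j.prop]
  exact AlgHom.congr_fun h q

/-- The join-meet ideal of the sublattice, inside the small polynomial ring. -/
noncomputable def I0 (A : Set L) : Ideal (MvPolynomial {a : L // a ∉ A} K) :=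
  Ideal.span {q | ∃ (a b : L) (ha : a ∉ A) (hb : b ∉ A) (_ : ¬ a ≤ b) (_ : ¬ b ≤ a)
    (hm : a ⊓ b ∉ A) (hj : a ⊔ b ∉ A),
    q = X ⟨a, ha⟩ * X ⟨b, hb⟩ - X ⟨a ⊓ b, hm⟩ * X ⟨a ⊔ b, hj⟩}

lemma map_ee_ILS {A : Set L} (hA : Admissible A) :
    Ideal.map (ee K A) (sublatticeJoinMeetIdeal K L A)
      = Ideal.map (C : MvPolynomial {a : L // a ∉ A} K →+*
          MvPolynomial {a : L // a ∈ A} (MvPolynomial {a : L // a ∉ A} K)) (I0 K A) := by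
  rw [sublatticeJoinMeetIdeal, I0, Ideal.map_span, Ideal.map_span]
  congr 1
  ext q
  constructor
  · rintro ⟨_, ⟨a, b, ha, hb, h1, h2, rfl⟩, rfl⟩
    obtain ⟨hm, hj⟩ := incomp_not_mem hA h1 h2 ha hb
    refine ⟨_, ⟨a, b, ha, hb, h1, h2, hm, hj, rfl⟩, ?_⟩
    rw [map_sub, map_mul, map_mul, map_sub, map_mul, map_mul,
      ee_X_of_not_mem K ha, ee_X_of_not_mem K hb, ee_X_of_not_mem K hm, ee_X_of_not_mem K hj]
  · rintro ⟨_, ⟨a, b, ha, hb, h1, h2, hm, hj, rfl⟩, rfl⟩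
    refine ⟨_, ⟨a, b, ha, hb, h1, h2, rfl⟩, ?_⟩
    rw [map_sub, map_mul, map_mul, map_sub, map_mul, map_mul,
      ee_X_of_not_mem K ha, ee_X_of_not_mem K hb, ee_X_of_not_mem K hm, ee_X_of_not_mem K hj]

lemma ee_fP (A : Set L) : ∃ f0, ee K A (fP K A) = C f0 := by
  have h : ee K A (fP K A) ∈ (IsScalarTower.toAlgHom K (MvPolynomial {a : L // a ∉ A} K)
      (MvPolynomial {a : L // a ∈ A} (MvPolynomial {a : L // a ∉ A} K))).range := by
    rw [fP, map_prod]
    refine Subalgebra.prod_mem _ fun a haf => ?_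
    have ha : a ∉ A := (Finset.mem_filter.1 haf).2
    rw [ee_X_of_not_mem K ha]
    exact ⟨X ⟨a, ha⟩, by simp [MvPolynomial.algebraMap_eq]⟩
  obtain ⟨f0, hf0⟩ := h
  exact ⟨f0, by rw [← hf0]; simp [MvPolynomial.algebraMap_eq]⟩

end Split

/-- The key reduction: the `A`-variables can be removed from a sup bound on `Q_A`. -/
lemma colon_reduce {A B : Set L} (hA : Admissible A) (hB : Admissible B) (hAB : A ⊆ B)
    (h : QQ K A ≤ (QQ K B ⊔ Jd K (B \ A)) ⊔ Jd K A) :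
    QQ K A ≤ QQ K B ⊔ Jd K (B \ A) := by
  intro g hg
  -- every σ-fixed element of QQ A lies in the target
  have key : ∀ q : MvPolynomial {a : L // a ∉ A} K,
      cmap K A q ∈ QQ K A → cmap K A q ∈ QQ K B ⊔ Jd K (B \ A) := by
    intro q hq
    obtain ⟨x, hx, w, hw, hxw⟩ := Submodule.mem_sup.1 (h hq)
    obtain ⟨u, hu, v, hv, hx'⟩ := Submodule.mem_sup.1 hx
    have hfix : cmap K A q = σh K A (cmap K A q) := (σh_cmap K q).symm
    rw [hfix, ← hxw, ← hx', map_add, map_add, σh_Jd_eq_zero K hw, add_zero]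
    exact Submodule.add_mem_sup (σh_mem_QQ K hB hAB hu)
      (σh_mem_Jd K (fun a haA => haA.2) hv)
  -- the coefficients of g w.r.t. the A-variables lie in QQ A
  obtain ⟨f0, hf0⟩ := ee_fP K A
  have hgf : g * fP K A ∈ sublatticeJoinMeetIdeal K L A := (mem_QQ K).1 hg
  have hmap : ee K A g * C f0 ∈ Ideal.map
      (C : MvPolynomial {a : L // a ∉ A} K →+* _) (I0 K A) := by
    rw [← hf0, ← map_mul, ← map_ee_ILS K hA]
    exact Ideal.mem_map_of_mem _ hgf
  have hcoeff : ∀ m, coeff m (ee K A g) * f0 ∈ I0 K A := by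
    intro m
    rw [mul_comm (ee K A g) (C f0)] at hmap
    have := MvPolynomial.mem_map_C_iff.1 hmap m
    rwa [coeff_C_mul, mul_comm] at this
  have hcm : ∀ m, cmap K A (coeff m (ee K A g)) ∈ QQ K A := by
    intro m
    rw [mem_QQ]
    have h1 : cmap K A (coeff m (ee K A g)) * fP K A
        = (ee K A).symm (C (coeff m (ee K A g) * f0)) := by
      rw [map_mul, cmap_apply]
      have h2 : fP K A = (ee K A).symm (C f0) := by
        rw [← hf0]; exact ((ee K A).symm_apply_apply _).symm
      rw [h2, ← map_mul]
    rw [h1]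
    have h2 : C (coeff m (ee K A g) * f0)
        ∈ Ideal.map (ee K A) (sublatticeJoinMeetIdeal K L A) := by
      rw [map_ee_ILS K hA]
      exact Ideal.mem_map_of_mem _ (hcoeff m)
    obtain ⟨x, hxI, hxe⟩ := (Ideal.mem_map_of_equiv (ee K A) _).1 h2
    have h3 : (ee K A).symm (C (coeff m (ee K A g) * f0)) = x := by
      rw [← hxe]; exact (ee K A).symm_apply_apply x
    rw [h3]; exact hxI
  -- decompose g as a combination of its coefficients
  have hdecomp : g = ∑ m ∈ (ee K A g).support,
      cmap K A (coeff m (ee K A g)) * (ee K A).symm (monomial m 1) := by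
    apply (ee K A).injective
    rw [map_sum]
    conv_lhs => rw [show ee K A g = ∑ m ∈ (ee K A g).support,
      monomial m (coeff m (ee K A g)) from (support_sum_monomial_coeff _).symm]
    refine Finset.sum_congr rfl fun m _ => ?_
    rw [map_mul, cmap_apply, AlgEquiv.apply_symm_apply, AlgEquiv.apply_symm_apply,
      C_mul_monomial, mul_one]
  rw [hdecomp]
  exact Ideal.sum_mem _ fun m _ => Ideal.mul_mem_right _ _ (key _ (hcm m))

lemma Jd_split {A B : Set L} (hAB : A ⊆ B) : Jd K B = Jd K (B \ A) ⊔ Jd K A := by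
  rw [Jd, Jd, Jd, ← Ideal.span_union]
  congr 1
  ext f
  constructor
  · rintro ⟨a, ha, rfl⟩
    by_cases h : a ∈ A
    · exact Or.inr ⟨a, h, rfl⟩
    · exact Or.inl ⟨a, ⟨ha, h⟩, rfl⟩
  · rintro (⟨a, ha, rfl⟩ | ⟨a, ha, rfl⟩)
    exacts [⟨a, ha.1, rfl⟩, ⟨a, hAB ha, rfl⟩]

end PAHelper

open PAHelper in
open scoped Classical in
/-- **Proposition.** Let `I_L` be radical and `A, B ⊆ L` admissible. Then `P_A(L) ⊊ P_B(L)`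
iff `A ⊊ B` and `I_{L_A} : ∏_{a ∉ A} X a ⊆ (I_{L_B} : ∏_{b ∉ B} X b) + (X b : b ∈ B ∖ A)`. -/
theorem PA_ssubset_PB_iff
    {L : Type*} [Lattice L] [Fintype L] (K : Type*) [Field K]
    (hrad : (joinMeetIdeal K L).IsRadical)
    (A B : Set L) (hA : Admissible A) (hB : Admissible B) :
    PA K L A < PA K L B ↔
      (A ⊂ B ∧
        Submodule.colon (sublatticeJoinMeetIdeal K L A)
            ((Ideal.span {∏ a ∈ Finset.univ.filter (fun a : L => a ∉ A), X a} : Ideal (MvPolynomial L K)) : Set (MvPolynomial L K)) ≤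
          Submodule.colon (sublatticeJoinMeetIdeal K L B)
              ((Ideal.span {∏ b ∈ Finset.univ.filter (fun b : L => b ∉ B), X b} : Ideal (MvPolynomial L K)) : Set (MvPolynomial L K)) ⊔
            Ideal.span {f | ∃ b ∈ B \ A, f = (X b : MvPolynomial L K)}) := by
  have hgoal2 : (Submodule.colon (sublatticeJoinMeetIdeal K L A)
            ((Ideal.span {∏ a ∈ Finset.univ.filter (fun a : L => a ∉ A), X a} : Ideal (MvPolynomial L K)) : Set (MvPolynomial L K)) ≤
          Submodule.colon (sublatticeJoinMeetIdeal K L B)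
              ((Ideal.span {∏ b ∈ Finset.univ.filter (fun b : L => b ∉ B), X b} : Ideal (MvPolynomial L K)) : Set (MvPolynomial L K)) ⊔
            Ideal.span {f | ∃ b ∈ B \ A, f = (X b : MvPolynomial L K)})
      = (QQ K A ≤ QQ K B ⊔ Jd K (B \ A)) := rfl
  rw [hgoal2]
  constructor
  · intro hlt
    have hle := hlt.le
    have hAB : A ⊆ B := by
      intro a ha
      by_contra hnb
      exact X_not_mem_PA K hB hnb (hle (X_mem_PA K ha))
    have hne : A ≠ B := fun h => hlt.ne (by rw [h])
    have hQ : QQ K A ≤ (QQ K B ⊔ Jd K (B \ A)) ⊔ Jd K A := by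
      intro g hg
      have h1 : g ∈ PA K L B := hle (by rw [PA_eq]; exact Submodule.mem_sup_left hg)
      rw [PA_eq, Jd_split K hAB, ← sup_assoc] at h1
      exact h1
    exact ⟨HasSubset.Subset.ssubset_of_ne hAB hne, colon_reduce K hA hB hAB hQ⟩
  · rintro ⟨hABs, hcol⟩
    have hAB : A ⊆ B := hABs.subset
    have hle : PA K L A ≤ PA K L B := by
      rw [PA_eq, PA_eq, Jd_split K hAB, ← sup_assoc]
      exact sup_le_sup_right hcol _
    obtain ⟨b, hbB, hbA⟩ := Set.exists_of_ssubset hABs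
    refine lt_of_le_of_ne hle fun hEq => ?_
    exact X_not_mem_PA K hA hbA (hEq ▸ X_mem_PA K hbB)
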